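/- With the Dulac function h(x,y) = 1/(x^2 y), for the vector field f(x,y) = (b + β_c x)(1 - x - y)x - x and g(x,y) = (b + β_d)(1 - x - y)y - y with b > 1 and β_c, β_d ≥ 0, the divergence ∂(hf)/∂x + ∂(hg)/∂y equals -(β_c x^2 + β_d y + (b-1))/(x^2 y) and is strictly negative at every point with x > 0, y > 0. -/

import Mathlib

/-- With the Dulac function `h(x,y) = 1/(x^2 y)`, for the mean-field vector field
`f(x,y) = (b + βc x)(1 - x - y)x - x`, `g(x,y) = (b + βd)(1 - x - y)y - y` with `b > 1`
and `βc, βd ≥ 0`, the divergence `∂(hf)/∂x + ∂(hg)/∂y` equals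
`-(βc x^2 + βd y + (b-1))/(x^2 y)` and is strictly negative at every point with
`x > 0`, `y > 0`. -/
theorem stmt13 (b βc βd x y : ℝ) (hb : 1 < b) (hβc : 0 ≤ βc) (hβd : 0 ≤ βd)
    (hx : 0 < x) (hy : 0 < y) :
    ∃ Dx Dy : ℝ,
      HasDerivAt (fun u : ℝ => (1 / (u ^ 2 * y)) * ((b + βc * u) * (1 - u - y) * u - u)) Dx x ∧
      HasDerivAt (fun v : ℝ => (1 / (x ^ 2 * v)) * ((b + βd) * (1 - x - v) * v - v)) Dy y ∧
      Dx + Dy = -((βc * x ^ 2 + βd * y + (b - 1)) / (x ^ 2 * y)) ∧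
      Dx + Dy < 0 := by
  have hx0 : x ≠ 0 := hx.ne'
  have hy0 : y ≠ 0 := hy.ne'
  -- numerator derivatives
  have h1 : HasDerivAt (fun u : ℝ => b + βc * u) βc x := by
    simpa using ((hasDerivAt_id x).const_mul βc).const_add b
  have h2 : HasDerivAt (fun u : ℝ => 1 - u - y) (-1) x := by
    simpa using (((hasDerivAt_id x).const_sub 1).sub_const y)
  have hF : HasDerivAt (fun u : ℝ => (b + βc * u) * (1 - u - y) * u - u)
      ((βc * (1 - x - y) + (b + βc * x) * (-1)) * x + (b + βc * x) * (1 - x - y) * 1 - 1) x :=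
    ((h1.mul h2).mul (hasDerivAt_id x)).sub (hasDerivAt_id x)
  have hGx : HasDerivAt (fun u : ℝ => u ^ 2 * y) (2 * x * y) x := by
    simpa [pow_two] using ((hasDerivAt_pow 2 x).mul_const y)
  have hGx0 : x ^ 2 * y ≠ 0 := by positivity
  have hDx := hF.div hGx hGx0
  have h3 : HasDerivAt (fun v : ℝ => (b + βd) * (1 - x - v) * v - v)
      ((b + βd) * (-1) * y + (b + βd) * (1 - x - y) * 1 - 1) y := by
    have h4 : HasDerivAt (fun v : ℝ => 1 - x - v) (-1) y := by
      simpa using ((hasDerivAt_id y).const_sub (1 - x))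
    exact (((h4.const_mul (b + βd)).mul (hasDerivAt_id y)).sub (hasDerivAt_id y))
  have hGy : HasDerivAt (fun v : ℝ => x ^ 2 * v) (x ^ 2) y := by
    simpa using ((hasDerivAt_id y).const_mul (x ^ 2))
  have hGy0 : x ^ 2 * y ≠ 0 := by positivity
  have hDy := h3.div hGy hGy0
  refine ⟨(((βc * (1 - x - y) + (b + βc * x) * (-1)) * x + (b + βc * x) * (1 - x - y) * 1 - 1) * (x ^ 2 * y) -
        ((b + βc * x) * (1 - x - y) * x - x) * (2 * x * y)) / (x ^ 2 * y) ^ 2,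
      (((b + βd) * (-1) * y + (b + βd) * (1 - x - y) * 1 - 1) * (x ^ 2 * y) -
        ((b + βd) * (1 - x - y) * y - y) * x ^ 2) / (x ^ 2 * y) ^ 2, ?_, ?_, ?_, ?_⟩
  · refine hDx.congr_of_eventuallyEq ?_
    filter_upwards with u
    rw [one_div, inv_mul_eq_div]
    rfl
  · refine hDy.congr_of_eventuallyEq ?_
    filter_upwards with v
    rw [one_div, inv_mul_eq_div]
    rfl
  · field_simp
    ring
  · have heq : (((βc * (1 - x - y) + (b + βc * x) * (-1)) * x + (b + βc * x) * (1 - x - y) * 1 - 1) * (x ^ 2 * y) -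
        ((b + βc * x) * (1 - x - y) * x - x) * (2 * x * y)) / (x ^ 2 * y) ^ 2 +
        (((b + βd) * (-1) * y + (b + βd) * (1 - x - y) * 1 - 1) * (x ^ 2 * y) -
        ((b + βd) * (1 - x - y) * y - y) * x ^ 2) / (x ^ 2 * y) ^ 2
        = -((βc * x ^ 2 + βd * y + (b - 1)) / (x ^ 2 * y)) := by
      field_simp
      ring
    rw [heq]
    have hnum : 0 < βc * x ^ 2 + βd * y + (b - 1) := by nlinarith [sq_nonneg x, mul_pos hx hx, mul_nonneg hβc (sq_nonneg x), mul_nonneg hβd hy.le]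
    have : 0 < (βc * x ^ 2 + βd * y + (b - 1)) / (x ^ 2 * y) := by positivity
    linarith
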